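/- Let C be a commutative artinian algebra over a field k such that C embeds as a k-subalgebra of the r×r matrix algebra over k. Then Spec(C) has at most r points, and for any n invertible in k, the equation x^n = 1 has at most n^r solutions in C. -/

import Mathlib

set_option maxHeartbeats 1000000
set_option synthInstance.maxHeartbeats 200000

/-- If `t` is nilpotent, `n` is invertible and `(1+t)^n = 1`, then `t = 0`. -/
lemma aux_nilpotent_root {R : Type*} [CommRing R] {n : ℕ} (hn : IsUnit (n : R))
    {t : R} (ht : IsNilpotent t) (h : (1 + t) ^ n = 1) : t = 0 := by
  rcases Nat.eq_zero_or_pos n with rfl | hpos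
  · have h01 : (0 : R) = 1 := isUnit_zero_iff.mp (by simpa using hn)
    haveI : Subsingleton R := subsingleton_of_zero_eq_one h01
    exact Subsingleton.elim _ _
  · have hexp : (t + 1) ^ n = ∑ k ∈ Finset.range (n + 1), t ^ k * (n.choose k : R) := by
      rw [add_pow]; simp
    have hsplit : (∑ k ∈ Finset.range 2, t ^ k * (n.choose k : R))
        + ∑ k ∈ Finset.Ico 2 (n + 1), t ^ k * (n.choose k : R)
        = ∑ k ∈ Finset.range (n + 1), t ^ k * (n.choose k : R) :=
      Finset.sum_range_add_sum_Ico _ (by omega)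
    have h2 : ∑ k ∈ Finset.range 2, t ^ k * (n.choose k : R) = 1 + t * n := by
      simp [Finset.sum_range_succ]
    have hmem : ∑ k ∈ Finset.Ico 2 (n + 1), t ^ k * (n.choose k : R) ∈ Ideal.span {t ^ 2} := by
      refine Ideal.sum_mem _ fun k hk => ?_
      have h2k : 2 ≤ k := (Finset.mem_Ico.mp hk).1
      refine Ideal.mem_span_singleton'.mpr ⟨t ^ (k - 2) * (n.choose k : R), ?_⟩
      have hpow : t ^ (k - 2) * t ^ 2 = t ^ k := by
        rw [← pow_add]
        congr 1
        omega
      calc t ^ (k - 2) * (n.choose k : R) * t ^ 2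
          = t ^ (k - 2) * t ^ 2 * (n.choose k : R) := by ring
        _ = t ^ k * (n.choose k : R) := by rw [hpow]
    have hzero : (t + 1) ^ n = 1 := by rwa [add_comm]
    have hkey : (1 + t * (n : R))
        + ∑ k ∈ Finset.Ico 2 (n + 1), t ^ k * (n.choose k : R) = 1 := by
      rw [← h2, hsplit, ← hexp, hzero]
    have hspan : t * (n : R) ∈ Ideal.span {t ^ 2} := by
      have hts : t * (n : R) = -(∑ k ∈ Finset.Ico 2 (n + 1), t ^ k * (n.choose k : R)) := by
        linear_combination hkey
      rw [hts]
      exact neg_mem hmem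
    obtain ⟨c, hc⟩ := Ideal.mem_span_singleton'.mp hspan
    have hnil : IsNilpotent (-(c * t)) := ((Commute.all c t).isNilpotent_mul_left ht).neg
    have hu : IsUnit ((n : R) - c * t) := by
      have := hnil.isUnit_add_left_of_commute hn (Commute.all _ _)
      rwa [← sub_eq_add_neg] at this
    have hte : t * ((n : R) - c * t) = 0 := by linear_combination -hc
    obtain ⟨v, hv⟩ := hu
    calc t = t * (↑v * ↑v⁻¹) := by rw [Units.mul_inv, mul_one]
    _ = (t * ↑v) * ↑v⁻¹ := by ring
    _ = 0 := by rw [hv, hte, zero_mul]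

/-- In a field, the `n`-th roots of unity form a finite set of cardinality at most `n`. -/
lemma aux_field_roots {F : Type*} [Field F] {n : ℕ} (hn : 0 < n) :
    Finite {y : F // y ^ n = 1} ∧ Nat.card {y : F // y ^ n = 1} ≤ n := by
  classical
  have hmap : Function.Injective (fun y : {y : F // y ^ n = 1} =>
      (⟨y.1, (Polynomial.mem_nthRootsFinset hn (1 : F)).mpr y.2⟩ :
        {z : F // z ∈ Polynomial.nthRootsFinset n (1 : F)})) := by
    intro a b hab
    simpa [Subtype.ext_iff] using hab
  have hfin : Finite {y : F // y ^ n = 1} := Finite.of_injective _ hmap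
  refine ⟨hfin, ?_⟩
  have hle := Nat.card_le_card_of_injective _ hmap
  have hcard : (Polynomial.nthRootsFinset n (1 : F)).card ≤ n := by
    rw [Polynomial.nthRootsFinset_def]
    exact (Multiset.toFinset_card_le _).trans (Polynomial.card_nthRoots n 1)
  have h2 : Nat.card {z : F // z ∈ Polynomial.nthRootsFinset n (1 : F)}
      = (Polynomial.nthRootsFinset n (1 : F)).card := by
    simp [Nat.card_eq_fintype_card, Fintype.card_coe]
  omega

/-- Two `n`-th roots of unity that differ by a nilpotent element are equal
(when `n` is invertible). -/
lemma aux_inj {C : Type*} [CommRing C] {n : ℕ} (hn : IsUnit (n : C)) (hpos : 0 < n)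
    {x y : C} (hx : x ^ n = 1) (hy : y ^ n = 1) (hxy : IsNilpotent (x - y)) : x = y := by
  have h1 : y * y ^ (n - 1) = y ^ n := by
    conv_rhs => rw [show n = 1 + (n - 1) by omega]
    rw [pow_add, pow_one]
  have hyu : IsUnit y := IsUnit.of_mul_eq_one (y ^ (n - 1)) (h1.trans hy)
  obtain ⟨u, hu⟩ := hyu
  have hinv : (↑u⁻¹ : C) * y = 1 := by rw [← hu]; exact u.inv_mul
  set t := (↑u⁻¹ : C) * (x - y) with ht
  have htn : IsNilpotent t := (Commute.all _ _).isNilpotent_mul_left hxy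
  have h2 : 1 + t = (↑u⁻¹ : C) * x := by rw [ht]; linear_combination -hinv
  have hu1 : (u ^ n : Cˣ) = 1 := by
    apply Units.ext
    rw [Units.val_pow_eq_pow_val, hu, hy, Units.val_one]
  have h3 : (1 + t) ^ n = 1 := by
    rw [h2, mul_pow, hx, mul_one, ← Units.val_pow_eq_pow_val, inv_pow, hu1, inv_one,
      Units.val_one]
  have ht0 : t = 0 := aux_nilpotent_root hn htn h3
  have h4 : x - y = ↑u * t := by rw [ht, ← mul_assoc, u.mul_inv, one_mul]
  have h5 : x - y = 0 := by rw [h4, ht0, mul_zero]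
  exact sub_eq_zero.mp h5

/-- Let `C` be a commutative artinian `k`-algebra which embeds as a `k`-subalgebra of
the `r × r` matrix algebra over `k`.  Then `Spec C` has at most `r` points, and for
every `n` invertible in `k`, the equation `x ^ n = 1` has at most `n ^ r` solutions
in `C`. -/
theorem stmt14 {k : Type u} [Field k] {C : Type u} [CommRing C] [Algebra k C]
    [IsArtinianRing C] (r : ℕ)
    (h : ∃ f : C →ₐ[k] Matrix (Fin r) (Fin r) k, Function.Injective f) :
    (Finite (PrimeSpectrum C) ∧ Nat.card (PrimeSpectrum C) ≤ r) ∧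
      ∀ n : ℕ, IsUnit (n : k) →
        {x : C | x ^ n = 1}.Finite ∧ {x : C | x ^ n = 1}.ncard ≤ n ^ r := by
  classical
  obtain ⟨f, hf⟩ := h
  haveI := (IsArtinianRing.setOfPred_isMaximal_finite C).to_subtype
  set idx := MaximalSpectrum C with hidxdef
  haveI : Fintype idx := Fintype.ofFinite _
  -- the injection Spec C → maximal ideals
  have hspecinj : Function.Injective (fun p : PrimeSpectrum C =>
      (⟨p.asIdeal, IsArtinianRing.isMaximal_of_isPrime p.asIdeal⟩ : idx)) := by
    intro p q hpq
    exact PrimeSpectrum.ext (congrArg MaximalSpectrum.asIdeal hpq)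
  haveI hfinSpec : Finite (PrimeSpectrum C) := Finite.of_injective _ hspecinj
  have hcard1 : Nat.card (PrimeSpectrum C) ≤ Nat.card idx :=
    Nat.card_le_card_of_injective _ hspecinj
  -- orthogonal idempotents in the quotient by the nilradical
  set ψ := IsArtinianRing.quotNilradicalEquivPi C with hψdef
  set π := Ideal.Quotient.mk (nilradical C) with hπdef
  set ε : idx → C ⧸ nilradical C := ⇑ψ.symm.toRingHom ∘ (fun I => Pi.single I 1) with hεdef
  have hεOI : OrthogonalIdempotents ε :=
    ((CompleteOrthogonalIdempotents.single (fun I : idx => C ⧸ I.1)).map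
      ψ.symm.toRingHom).toOrthogonalIdempotents
  have hε0 : ∀ I : idx, ε I ≠ 0 := by
    intro I hI0
    haveI : Nontrivial (C ⧸ I.1) := Ideal.Quotient.nontrivial_iff.mpr I.2.ne_top
    have h1 : (Pi.single I 1 : ∀ J : idx, C ⧸ J.1) = 0 := by
      have h2 := congrArg ψ hI0
      rw [map_zero] at h2
      rw [← h2, hεdef]
      simp only [Function.comp_apply, RingEquiv.toRingHom_eq_coe, RingHom.coe_coe]
      exact (ψ.apply_symm_apply _).symm
    have h2 := congrFun h1 I
    rw [Pi.single_eq_same] at h2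
    exact one_ne_zero h2
  -- lift the idempotents to C
  have hker : ∀ x ∈ RingHom.ker π, IsNilpotent x := by
    intro x hx
    rw [hπdef, Ideal.mk_ker] at hx
    exact hx
  obtain ⟨e', hOI, he'⟩ := OrthogonalIdempotents.lift_of_isNilpotent_ker π hker hεOI
    (fun I => by
      obtain ⟨x, hx⟩ := Ideal.Quotient.mk_surjective (ε I)
      exact ⟨x, hx⟩)
  have he'0 : ∀ I : idx, e' I ≠ 0 := by
    intro I hI0
    apply hε0 I
    rw [← congrFun he' I]
    simp [hI0]
  -- push to endomorphisms of k^r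
  set ρ : C →+* ((Fin r → k) →ₗ[k] (Fin r → k)) :=
    ((Matrix.toLinAlgEquiv' : Matrix (Fin r) (Fin r) k ≃ₐ[k] _).toAlgHom.comp f).toRingHom
    with hρdef
  have hρinj : Function.Injective ρ := by
    intro a b hab
    apply hf
    exact Matrix.toLinAlgEquiv'.injective hab
  set E : idx → ((Fin r → k) →ₗ[k] (Fin r → k)) := ⇑ρ ∘ e' with hEdef
  have hOIE : OrthogonalIdempotents E := hOI.map ρ
  have hE0 : ∀ I : idx, E I ≠ 0 := by
    intro I hI0
    apply he'0 I
    apply hρinj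
    rw [map_zero]
    exact hI0
  set p : idx → Submodule k (Fin r → k) := fun I => LinearMap.range (E I) with hpdef
  have hind : iSupIndep p := by
    intro I
    have hker2 : (⨆ (J) (_ : J ≠ I), p J) ≤ LinearMap.ker (E I) := by
      refine iSup_le fun J => iSup_le fun hJ => ?_
      rintro v ⟨w, rfl⟩
      rw [LinearMap.mem_ker]
      have h0 : E I * E J = 0 := hOIE.ortho hJ.symm
      calc E I ((E J) w) = (E I * E J) w := (Module.End.mul_apply _ _ _).symm
      _ = 0 := by rw [h0]; rfl
    refine Disjoint.mono_right hker2 ?_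
    rw [Submodule.disjoint_def]
    rintro v ⟨w, rfl⟩ hv'
    rw [LinearMap.mem_ker] at hv'
    have hI : E I * E I = E I := hOIE.idem I
    calc E I w = (E I * E I) w := by rw [hI]
    _ = E I (E I w) := Module.End.mul_apply _ _ _
    _ = 0 := hv'
  have hall : ∀ I : idx, p I ≠ ⊥ := fun I h0 => hE0 I (LinearMap.range_eq_bot.mp h0)
  have hfr := hind.subtype_ne_bot_le_finrank
  have hcardidx : Nat.card idx ≤ r := by
    rw [Nat.card_eq_fintype_card]
    have heq : Fintype.card {I : idx // p I ≠ ⊥} = Fintype.card idx :=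
      Fintype.card_congr (Equiv.subtypeUnivEquiv hall)
    rw [← heq]
    simpa [Module.finrank_fin_fun] using hfr
  have hcardSpec : Nat.card (PrimeSpectrum C) ≤ r := hcard1.trans hcardidx
  refine ⟨⟨hfinSpec, hcardSpec⟩, fun n hn => ?_⟩
  -- second part
  have hn0 : 0 < n := by
    rcases Nat.eq_zero_or_pos n with rfl | h0
    · rw [Nat.cast_zero] at hn
      exact absurd hn not_isUnit_zero
    · exact h0
  have hnC : IsUnit (n : C) := by
    have := hn.map (algebraMap k C)
    rwa [map_natCast] at this
  haveI : Fintype (PrimeSpectrum C) := Fintype.ofFinite _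
  haveI hmax : ∀ q : PrimeSpectrum C, q.asIdeal.IsMaximal :=
    fun q => IsArtinianRing.isMaximal_of_isPrime q.asIdeal
  letI : ∀ q : PrimeSpectrum C, Field (C ⧸ q.asIdeal) := fun q => Ideal.Quotient.field q.asIdeal
  have hfld := fun q : PrimeSpectrum C =>
    @aux_field_roots (C ⧸ q.asIdeal) _ n hn0
  haveI hfin1 : ∀ q : PrimeSpectrum C, Finite {y : C ⧸ q.asIdeal // y ^ n = 1} :=
    fun q => (hfld q).1
  set Φ : {x : C | x ^ n = 1} →
      ∀ q : PrimeSpectrum C, {y : C ⧸ q.asIdeal // y ^ n = 1} :=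
    fun x q => ⟨Ideal.Quotient.mk q.asIdeal x.1, by
      rw [← map_pow, x.2, map_one]⟩ with hΦdef
  have hΦ : Function.Injective Φ := by
    intro a b hab
    have hnil : IsNilpotent (a.1 - b.1) := by
      rw [nilpotent_iff_mem_prime]
      intro J hJ
      have h5 : Ideal.Quotient.mk J a.1 = Ideal.Quotient.mk J b.1 :=
        congrArg Subtype.val (congrFun hab ⟨J, hJ⟩)
      rwa [Ideal.Quotient.mk_eq_mk_iff_sub_mem] at h5
    exact Subtype.ext (aux_inj hnC hn0 a.2 b.2 hnil)
  haveI hfinS : Finite {x : C | x ^ n = 1} := Finite.of_injective Φ hΦ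
  refine ⟨Set.finite_coe_iff.mp hfinS, ?_⟩
  have h6 : Nat.card {x : C | x ^ n = 1}
      ≤ Nat.card (∀ q : PrimeSpectrum C, {y : C ⧸ q.asIdeal // y ^ n = 1}) :=
    Nat.card_le_card_of_injective Φ hΦ
  rw [Nat.card_pi] at h6
  have h7 : ∏ q : PrimeSpectrum C, Nat.card {y : C ⧸ q.asIdeal // y ^ n = 1}
      ≤ ∏ _q : PrimeSpectrum C, n :=
    Finset.prod_le_prod' (fun q _ => (hfld q).2)
  rw [Finset.prod_const] at h7
  have h8 : n ^ (Finset.univ : Finset (PrimeSpectrum C)).card ≤ n ^ r := by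
    apply Nat.pow_le_pow_right hn0
    rw [← Nat.card_eq_fintype_card] at *
    simpa using hcardSpec
  calc {x : C | x ^ n = 1}.ncard = Nat.card {x : C | x ^ n = 1} :=
        (Nat.card_coe_set_eq _).symm
  _ ≤ ∏ q : PrimeSpectrum C, Nat.card {y : C ⧸ q.asIdeal // y ^ n = 1} := h6
  _ ≤ n ^ (Finset.univ : Finset (PrimeSpectrum C)).card := h7
  _ ≤ n ^ r := h8
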